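/- For a partial order R on [N] and an R-listing ω, set χ(R, ω) = Σ_{J ∈ Comp(R,ω)} (−1)^{(N−1)−|J|}. Let P be a partial order on [m] and Q a partial order on [n], and let PQ be their ordinal sum on [m+n]. Then Σ_{ω a PQ-listing} χ(PQ, ω) = (Σ_{ω a P-listing} χ(P, ω)) · (Σ_{ω a Q-listing} χ(Q, ω)). In other words, the character ζ_1(P) = Σ_{ω ∈ Rev(P)} χ_{Comp(P,ω)} is multiplicative with respect to ordinal sum. -/

import Mathlib

/-- `S ⊆ [n-1]` is a set of border points of the listing `ω` w.r.t. `le` on `[n]`. -/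
def IsBorderSet (n : ℕ) (le : Fin n → Fin n → Prop) (ω : Equiv.Perm (Fin n))
    (S : Finset ℕ) : Prop :=
  S ⊆ Finset.Ico 1 n ∧
    ∀ i j : Fin n, i < j → (∀ s ∈ S, ¬((i : ℕ) < s ∧ s ≤ (j : ℕ))) → ¬ le (ω j) (ω i)

instance (n : ℕ) (le : Fin n → Fin n → Prop) [DecidableRel le] (ω : Equiv.Perm (Fin n))
    (S : Finset ℕ) : Decidable (IsBorderSet n le ω S) := by
  unfold IsBorderSet; infer_instance

/-- `Comp(P, ω)`: the collection of all sets of border points of `ω`. -/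
def CompSet (n : ℕ) (le : Fin n → Fin n → Prop) [DecidableRel le]
    (ω : Equiv.Perm (Fin n)) : Finset (Finset ℕ) :=
  (Finset.Ico 1 n).powerset.filter (IsBorderSet n le ω)

/-- The ordinal sum `PQ` on `[m+n]` of `P` on `[m]` and `Q` on `[n]`. -/
def OrdSumLe (m n : ℕ) (leP : Fin m → Fin m → Prop) (leQ : Fin n → Fin n → Prop)
    (x y : Fin (m + n)) : Prop :=
  (∃ hx : (x : ℕ) < m, ∃ hy : (y : ℕ) < m, leP ⟨x, hx⟩ ⟨y, hy⟩) ∨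
  (∃ _ : m ≤ (x : ℕ), ∃ _ : m ≤ (y : ℕ),
      leQ ⟨(x : ℕ) - m, by have := x.isLt; omega⟩ ⟨(y : ℕ) - m, by have := y.isLt; omega⟩) ∨
  ((x : ℕ) < m ∧ m ≤ (y : ℕ))

instance (m n : ℕ) (leP : Fin m → Fin m → Prop) [DecidableRel leP]
    (leQ : Fin n → Fin n → Prop) [DecidableRel leQ] :
    DecidableRel (OrdSumLe m n leP leQ) := fun x y => by
  unfold OrdSumLe; infer_instance


open Finset

set_option linter.unusedSectionVars false

variable {α : Type*} [DecidableEq α] (r : α → α → Prop) [DecidableRel r]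

/-- a word with no later element below an earlier one -/
def GoodW (w : List α) : Prop := w.Pairwise (fun x y => ¬ r y x)

instance (w : List α) : Decidable (GoodW r w) := by unfold GoodW; infer_instance

/-- the finset of all orderings (as lists) of a finset -/
noncomputable def permsF (s : Finset α) : Finset (List α) := s.toList.permutations.toFinset

lemma mem_permsF {s : Finset α} {w : List α} : w ∈ permsF s ↔ (w : Multiset α) = s.val := by
  simp only [permsF, List.mem_toFinset, List.mem_permutations]
  rw [← Multiset.coe_eq_coe, Finset.coe_toList]

lemma nodup_of_mem_permsF {s : Finset α} {w : List α} (h : w ∈ permsF s) : w.Nodup := by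
  rw [mem_permsF] at h
  have := s.nodup
  rw [← h] at this
  exact this

lemma length_of_mem_permsF {s : Finset α} {w : List α} (h : w ∈ permsF s) :
    w.length = s.card := by
  rw [mem_permsF] at h
  have : Multiset.card (w : Multiset α) = Multiset.card s.val := by rw [h]
  simpa using this

lemma mem_of_mem_permsF {s : Finset α} {w : List α} (h : w ∈ permsF s) {x : α}
    (hx : x ∈ w) : x ∈ s := by
  rw [mem_permsF] at h
  rw [← Finset.mem_val, ← h]
  exact hx

/-- number of good orderings ("linear extensions") of s -/
noncomputable def eL (s : Finset α) : ℤ := ((permsF s).filter (GoodW r)).card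

/-- the freeness condition on a word and a "link set" K of positions -/
def FreeW (w : List α) (K : Finset ℕ) : Prop :=
  ∀ i j : ℕ, i < j → (∀ k, i < k → k ≤ j → k ∈ K) →
    ∀ x y, w[i]? = some x → w[j]? = some y → ¬ r y x

instance (w : List α) (K : Finset ℕ) : Decidable (FreeW r w K) := by
  apply decidable_of_iff (∀ i ∈ Finset.range w.length, ∀ j ∈ Finset.range w.length,
      i < j → (∀ k ∈ Finset.Icc (i+1) j, k ∈ K) →
      ∀ x ∈ w[i]?, ∀ y ∈ w[j]?, ¬ r y x)
  constructor
  · intro h i j hij hK x y hx hy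
    have hi : i < w.length := by
      by_contra hc
      rw [List.getElem?_eq_none (by omega)] at hx; simp at hx
    have hj : j < w.length := by
      by_contra hc
      rw [List.getElem?_eq_none (by omega)] at hy; simp at hy
    exact h i (Finset.mem_range.2 hi) j (Finset.mem_range.2 hj) hij
      (fun k hk => hK k (by simp at hk; omega) (by simp at hk; omega)) x hx y hy
  · intro h i _ j _ hij hK x hx y hy
    refine h i j hij (fun k h1 h2 => hK k (Finset.mem_Icc.2 ⟨by omega, h2⟩)) x y hx hy

/-- the master sum -/
noncomputable def SZ (s : Finset α) : ℤ :=
  ∑ w ∈ permsF s, ∑ K ∈ (Finset.Ico 1 s.card).powerset,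
    if FreeW r w K then (-1 : ℤ) ^ K.card else 0

lemma permsF_empty : permsF (∅ : Finset α) = {([] : List α)} := by
  apply Finset.ext
  intro w
  simp [mem_permsF]

lemma GoodW_nil : GoodW r ([] : List α) := List.Pairwise.nil

lemma eL_empty : eL r (∅ : Finset α) = 1 := by
  rw [eL, permsF_empty]
  rw [Finset.filter_singleton]
  simp [GoodW_nil]

lemma SZ_empty : SZ r (∅ : Finset α) = 1 := by
  rw [SZ, permsF_empty]
  simp only [Finset.card_empty, Finset.sum_singleton]
  rw [show Finset.Ico 1 0 = ∅ by rfl]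
  simp only [Finset.powerset_empty, Finset.sum_singleton]
  have : FreeW r ([] : List α) ∅ := by
    intro i j hij hK x y hx hy
    simp at hx
  simp [this]


/-- The key splitting lemma. -/
lemma freeW_append {w₁ w₂ : List α} {K K₂ : Finset ℕ} (c : ℕ) (hc : w₁.length = c)
    (hc1 : 1 ≤ c) (hIco : Finset.Ico 1 c ⊆ K) (hcK : c ∉ K)
    (hK₂ : ∀ k', k' ∈ K₂ ↔ (0 < k' ∧ k' + c ∈ K)) :
    FreeW r (w₁ ++ w₂) K ↔ GoodW r w₁ ∧ FreeW r w₂ K₂ := by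
  constructor
  · intro F
    constructor
    · rw [GoodW, List.pairwise_iff_getElem]
      intro i j hi hj hij
      refine F i j hij ?_ _ _ ?_ ?_
      · intro k h1 h2
        exact hIco (Finset.mem_Ico.2 ⟨by omega, by omega⟩)
      · rw [List.getElem?_append_left (by omega), List.getElem?_eq_getElem hi]
      · rw [List.getElem?_append_left (by omega), List.getElem?_eq_getElem hj]
    · intro i j hij hK' x y hx hy
      refine F (c+i) (c+j) (by omega) ?_ x y ?_ ?_
      · intro k h1 h2
        have hk2 : k - c ∈ K₂ := hK' (k - c) (by omega) (by omega)
        have h3 := (hK₂ (k - c)).1 hk2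
        have h4 : k - c + c = k := by omega
        rw [h4] at h3
        exact h3.2
      · rw [List.getElem?_append_right (by omega)]
        rw [show c + i - w₁.length = i by omega]
        exact hx
      · rw [List.getElem?_append_right (by omega)]
        rw [show c + j - w₁.length = j by omega]
        exact hy
  · rintro ⟨G, F₂⟩ i j hij hK' x y hx hy
    by_cases hjc : j < c
    · rw [List.getElem?_append_left (by omega)] at hx hy
      have hi : i < w₁.length := by omega
      have hj : j < w₁.length := by omega
      rw [List.getElem?_eq_getElem hi] at hx
      rw [List.getElem?_eq_getElem hj] at hy
      have := (List.pairwise_iff_getElem.1 G) i j hi hj hij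
      rw [Option.some_inj] at hx hy
      rw [← hx, ← hy]
      exact this
    · by_cases hic : i < c
      · exact absurd (hK' c (by omega) (by omega)) hcK
      · rw [List.getElem?_append_right (by omega)] at hx hy
        refine F₂ (i - w₁.length) (j - w₁.length) (by omega) ?_ x y hx hy
        intro k' h1 h2
        rw [hK₂]
        refine ⟨by omega, hK' (k' + c) (by omega) (by omega)⟩


lemma filter_split {p : α → Bool} {l : List α} (h : l.Pairwise (fun a b => p b → p a)) :
    l.filter p ++ l.filter (fun x => !p x) = l := by
  induction l with
  | nil => rfl
  | cons a t ih =>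
    rw [List.pairwise_cons] at h
    obtain ⟨ha, ht⟩ := h
    by_cases hpa : p a
    · rw [List.filter_cons_of_pos hpa, List.filter_cons_of_neg (by simp [hpa])]
      rw [List.cons_append, ih ht]
    · have hall : ∀ b ∈ t, ¬ (p b : Prop) := fun b hb hpb => hpa (ha b hb hpb)
      rw [List.filter_cons_of_neg (by simpa using hpa),
        List.filter_cons_of_pos (by simp [hpa])]
      rw [List.filter_eq_nil_iff.2 (by simpa using hall), List.nil_append,
        List.filter_eq_self.2 (by simpa using hall)]

lemma disjoint_of_cross {sA sB : Finset α}
    (hcross : ∀ a ∈ sA, ∀ b ∈ sB, r a b ∧ ¬ r b a) : Disjoint sA sB := by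
  rw [Finset.disjoint_left]
  intro a haA haB
  exact (hcross a haA a haB).2 (hcross a haA a haB).1

lemma union_val_of_cross {sA sB : Finset α}
    (hcross : ∀ a ∈ sA, ∀ b ∈ sB, r a b ∧ ¬ r b a) :
    (sA ∪ sB).val = sA.val + sB.val := by
  rw [← Finset.disjUnion_eq_union sA sB (disjoint_of_cross r hcross)]
  rfl

lemma eL_union {sA sB : Finset α}
    (hcross : ∀ a ∈ sA, ∀ b ∈ sB, r a b ∧ ¬ r b a) :
    eL r (sA ∪ sB) = eL r sA * eL r sB := by
  have hdisj := disjoint_of_cross r hcross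
  rw [eL, eL, eL, ← Nat.cast_mul, Nat.cast_inj, ← Finset.card_product]
  apply Finset.card_bij' (fun w _ => (w.filter (fun x => x ∈ sA), w.filter (fun x => x ∈ sB)))
    (fun p _ => p.1 ++ p.2)
  · intro w hw
    rw [Finset.mem_filter] at hw
    obtain ⟨hwp, hwg⟩ := hw
    have hmem : ∀ x ∈ w, x ∈ sA ∪ sB := fun x hx => mem_of_mem_permsF hwp hx
    have hsorted : w.Pairwise (fun a b => ((fun x => decide (x ∈ sA)) b : Bool) → ((fun x => decide (x ∈ sA)) a : Bool)) := by
      rw [List.pairwise_iff_getElem]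
      intro i j hi hj hij
      simp only [decide_eq_true_eq]
      intro hjA
      by_contra hiA
      have hiB : w[i] ∈ sB := by
        have := hmem w[i] (List.getElem_mem hi)
        rw [Finset.mem_union] at this
        tauto
      have h1 := (hcross w[j] hjA w[i] hiB).1
      have h2 := (List.pairwise_iff_getElem.1 hwg) i j hi hj hij
      exact h2 h1
    have hB : List.filter (fun x => decide (x ∈ sB)) w
        = List.filter (fun x => ! decide (x ∈ sA)) w := by
      apply List.filter_congr
      intro x hx
      have := hmem x hx
      rw [Finset.mem_union] at this
      by_cases hA : x ∈ sA
      · simp [hA, Finset.disjoint_left.1 hdisj hA]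
      · simp [hA]
        tauto
    show List.filter (fun x => decide (x ∈ sA)) w ++ List.filter (fun x => decide (x ∈ sB)) w = w
    rw [hB]
    exact filter_split hsorted
  · rintro ⟨w₁, w₂⟩ hp
    rw [Finset.mem_product] at hp
    obtain ⟨h1, h2⟩ := hp
    rw [Finset.mem_filter] at h1 h2
    have hA1 : ∀ x ∈ w₁, x ∈ sA := fun x hx => mem_of_mem_permsF h1.1 hx
    have hB2 : ∀ x ∈ w₂, x ∈ sB := fun x hx => mem_of_mem_permsF h2.1 hx
    have e1 : List.filter (fun x => decide (x ∈ sA)) (w₁ ++ w₂) = w₁ := by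
      rw [List.filter_append, List.filter_eq_self.2 (by simpa using hA1),
        List.filter_eq_nil_iff.2 (by
          intro a ha
          simp only [decide_eq_true_eq]
          exact Finset.disjoint_right.1 hdisj (hB2 a ha)), List.append_nil]
    have e2 : List.filter (fun x => decide (x ∈ sB)) (w₁ ++ w₂) = w₂ := by
      rw [List.filter_append, List.filter_eq_nil_iff.2 (by
          intro a ha
          simp only [decide_eq_true_eq]
          exact Finset.disjoint_left.1 hdisj (hA1 a ha)),
        List.filter_eq_self.2 (by simpa using hB2), List.nil_append]
    simp only [e1, e2]
  · intro w hw
    rw [Finset.mem_filter] at hw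
    obtain ⟨hwp, hwg⟩ := hw
    rw [Finset.mem_product, Finset.mem_filter, Finset.mem_filter]
    have hwval : (w : Multiset α) = sA.val + sB.val := by
      rw [mem_permsF.1 hwp, union_val_of_cross r hcross]
    refine ⟨⟨?_, ?_⟩, ⟨?_, ?_⟩⟩
    · rw [mem_permsF]
      have : (List.filter (fun x => decide (x ∈ sA)) w : Multiset α)
          = Multiset.filter (fun x => x ∈ sA) (w : Multiset α) := by
        simp [Multiset.filter_coe]
      rw [this, hwval, Multiset.filter_add]
      rw [Multiset.filter_eq_self.2 (fun a ha => Finset.mem_def.2 ha),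
        Multiset.filter_eq_nil.2 (fun a ha => Finset.disjoint_right.1 hdisj (Finset.mem_def.2 ha)),
        add_zero]
    · exact List.Pairwise.sublist List.filter_sublist hwg
    · rw [mem_permsF]
      have : (List.filter (fun x => decide (x ∈ sB)) w : Multiset α)
          = Multiset.filter (fun x => x ∈ sB) (w : Multiset α) := by
        simp [Multiset.filter_coe]
      rw [this, hwval, Multiset.filter_add]
      rw [Multiset.filter_eq_nil.2 (fun a ha => Finset.disjoint_left.1 hdisj (Finset.mem_def.2 ha)),
        Multiset.filter_eq_self.2 (fun a ha => Finset.mem_def.2 ha), zero_add]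
    · exact List.Pairwise.sublist List.filter_sublist hwg
  · rintro ⟨w₁, w₂⟩ hp
    rw [Finset.mem_product] at hp
    obtain ⟨h1, h2⟩ := hp
    rw [Finset.mem_filter] at h1 h2 ⊢
    constructor
    · rw [mem_permsF, union_val_of_cross r hcross, ← Multiset.coe_add,
        (mem_permsF.1 h1.1), (mem_permsF.1 h2.1)]
    · rw [GoodW, List.pairwise_append]
      refine ⟨h1.2, h2.2, ?_⟩
      intro x hx y hy
      exact (hcross x (mem_of_mem_permsF h1.1 hx) y (mem_of_mem_permsF h2.1 hy)).2

/-- pairs (word, linkset) that are free -/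
noncomputable def pairsF (u : Finset α) : Finset (List α × Finset ℕ) :=
  ((permsF u) ×ˢ (Finset.Ico 1 u.card).powerset).filter (fun p => FreeW r p.1 p.2)

lemma SZ_eq_pairs (u : Finset α) :
    SZ r u = ∑ p ∈ pairsF r u, (-1 : ℤ) ^ p.2.card := by
  rw [pairsF, Finset.sum_filter, Finset.sum_product, SZ]

lemma cOf_ex (K : Finset ℕ) : ∃ c, 0 < c ∧ c ∉ K := by
  refine ⟨K.sup id + 1, Nat.succ_pos _, fun h => ?_⟩
  have := Finset.le_sup (f := id) h
  simp only [id] at this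
  omega

/-- the first cut point of a link set: least positive integer not in K -/
noncomputable def cOf (K : Finset ℕ) : ℕ := Nat.find (cOf_ex K)

lemma cOf_spec (K : Finset ℕ) : 0 < cOf K ∧ cOf K ∉ K := Nat.find_spec (cOf_ex K)

lemma cOf_min (K : Finset ℕ) {k : ℕ} (h0 : 0 < k) (hk : k < cOf K) : k ∈ K := by
  by_contra hc
  have : cOf K ≤ k := Nat.find_le ⟨h0, hc⟩
  omega

lemma cOf_le (K : Finset ℕ) {c : ℕ} (h0 : 0 < c) (hc : c ∉ K) : cOf K ≤ c :=
  Nat.find_le ⟨h0, hc⟩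

lemma cOf_eq (K : Finset ℕ) {c : ℕ} (h0 : 0 < c) (hc : c ∉ K)
    (hmin : ∀ k, 0 < k → k < c → k ∈ K) : cOf K = c := by
  have h1 := cOf_le K h0 hc
  rcases lt_or_eq_of_le h1 with h | h
  · exact absurd (hmin _ (cOf_spec K).1 h) (cOf_spec K).2
  · exact h

lemma K_decomp {K : Finset ℕ} {N : ℕ} (hK : K ⊆ Finset.Ico 1 N) :
    Finset.Ico 1 (cOf K) ∪ K.filter (fun k => cOf K < k) = K := by
  apply Finset.ext
  intro k
  simp only [Finset.mem_union, Finset.mem_Ico, Finset.mem_filter]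
  constructor
  · rintro (⟨h1, h2⟩ | ⟨h1, _⟩)
    · exact cOf_min K h1 h2
    · exact h1
  · intro hk
    have h1 := hK hk
    rw [Finset.mem_Ico] at h1
    have h2 : k ≠ cOf K := fun h => (cOf_spec K).2 (h ▸ hk)
    rcases lt_or_gt_of_ne h2 with h | h
    · exact Or.inl ⟨h1.1, h⟩
    · exact Or.inr ⟨hk, h⟩

lemma hK2_char {K : Finset ℕ} (c : ℕ) :
    ∀ k', k' ∈ (K.filter (fun k => c < k)).image (fun k => k - c) ↔
      (0 < k' ∧ k' + c ∈ K) := by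
  intro k'
  simp only [Finset.mem_image, Finset.mem_filter]
  constructor
  · rintro ⟨a, ⟨haK, hac⟩, rfl⟩
    exact ⟨by omega, by rwa [show a - c + c = a by omega]⟩
  · rintro ⟨h0, hK⟩
    exact ⟨k' + c, ⟨hK, by omega⟩, by omega⟩

lemma fwd_all {s : Finset α} (hN : 0 < s.card) {w : List α} {K : Finset ℕ}
    (hw : w ∈ permsF s) (hKp : K ⊆ Finset.Ico 1 s.card) (hF : FreeW r w K) :
    ((w.take (cOf K)).toFinset ∈ s.powerset.filter (fun t => t.Nonempty)) ∧
    (w.take (cOf K) ∈ (permsF ((w.take (cOf K)).toFinset)).filter (GoodW r)) ∧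
    ((w.drop (cOf K), (K.filter (fun k => cOf K < k)).image (fun k => k - cOf K)) ∈
      pairsF r (s \ (w.take (cOf K)).toFinset)) ∧
    (w.take (cOf K)).toFinset.card = cOf K ∧
    K.card = (cOf K - 1) + ((K.filter (fun k => cOf K < k)).image (fun k => k - cOf K)).card := by
  set c := cOf K with hcdef
  set K₂ := (K.filter (fun k => c < k)).image (fun k => k - c) with hK₂def
  have hc0 : 0 < c := (cOf_spec K).1
  have hcK : c ∉ K := (cOf_spec K).2
  have hcN : c ≤ s.card := cOf_le K hN (fun h => by
    have := hKp h; rw [Finset.mem_Ico] at this; omega)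
  have hwlen : w.length = s.card := length_of_mem_permsF hw
  have hwnd : w.Nodup := nodup_of_mem_permsF hw
  have h1len : (w.take c).length = c := by rw [List.length_take]; omega
  have h1nd : (w.take c).Nodup := List.Nodup.sublist (List.take_sublist c w) hwnd
  have htval : ((w.take c).toFinset).val = ((w.take c) : Multiset α) := by
    rw [List.toFinset_val, List.dedup_eq_self.2 h1nd]
  have htcard : (w.take c).toFinset.card = c := by
    rw [List.toFinset_card_of_nodup h1nd, h1len]
  have hts : (w.take c).toFinset ⊆ s := by
    intro x hx
    rw [List.mem_toFinset] at hx
    exact mem_of_mem_permsF hw (List.mem_of_mem_take hx)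
  have hGF : GoodW r (w.take c) ∧ FreeW r (w.drop c) K₂ := by
    rw [← freeW_append r c h1len hc0
      (fun k hk => by rw [Finset.mem_Ico] at hk; exact cOf_min K hk.1 hk.2) hcK
      (hK2_char c), List.take_append_drop]
    exact hF
  refine ⟨?_, ?_, ?_, htcard, ?_⟩
  · rw [Finset.mem_filter, Finset.mem_powerset]
    refine ⟨hts, ?_⟩
    rw [← Finset.card_pos, htcard]; exact hc0
  · rw [Finset.mem_filter, mem_permsF, htval]
    exact ⟨rfl, hGF.1⟩
  · rw [pairsF, Finset.mem_filter, Finset.mem_product]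
    refine ⟨⟨?_, ?_⟩, hGF.2⟩
    · rw [mem_permsF, Finset.sdiff_val, htval]
      have : (w.take c : Multiset α) + (w.drop c : Multiset α) = (w : Multiset α) := by
        rw [Multiset.coe_add, List.take_append_drop]
      rw [mem_permsF.1 hw] at this
      rw [← this, add_tsub_cancel_left]
    · rw [Finset.mem_powerset]
      intro k' hk'
      rw [hK2_char c k'] at hk'
      have := hKp hk'.2
      rw [Finset.mem_Ico] at this
      rw [Finset.mem_Ico, Finset.card_sdiff_of_subset hts, htcard]
      omega
  · have hdecomp := K_decomp (N := s.card) hKp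
    rw [← hcdef] at hdecomp
    have hdisj : Disjoint (Finset.Ico 1 c) (K.filter (fun k => c < k)) := by
      rw [Finset.disjoint_left]
      intro a ha hb
      rw [Finset.mem_Ico] at ha
      rw [Finset.mem_filter] at hb
      omega
    have hinj : ((K.filter (fun k => c < k)).image (fun k => k - c)).card
        = (K.filter (fun k => c < k)).card := by
      apply Finset.card_image_of_injOn
      intro a ha b hb hab
      rw [Finset.mem_coe, Finset.mem_filter] at ha hb
      have hab' : a - c = b - c := hab
      omega
    calc K.card = (Finset.Ico 1 c ∪ K.filter (fun k => c < k)).card := by rw [hdecomp]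
    _ = (c - 1) + K₂.card := by
        rw [Finset.card_union_of_disjoint hdisj, Nat.card_Ico, hK₂def, hinj]

lemma toFinset_of_permsF {u : Finset α} {w : List α} (h : w ∈ permsF u) :
    w.toFinset = u := by
  apply Finset.ext
  intro x
  rw [List.mem_toFinset, ← Finset.mem_val, ← mem_permsF.1 h]
  exact Iff.rfl

lemma bwd_all {s t : Finset α} (hts : t ⊆ s) (htne : t.Nonempty)
    {w₁ w₂ : List α} {K₂ : Finset ℕ}
    (hw₁ : w₁ ∈ permsF t) (hg : GoodW r w₁)
    (hw₂ : w₂ ∈ permsF (s \ t)) (hK₂ : K₂ ⊆ Finset.Ico 1 ((s \ t).card))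
    (hF₂ : FreeW r w₂ K₂) :
    ((w₁ ++ w₂, Finset.Ico 1 t.card ∪ K₂.image (fun k => k + t.card)) ∈ pairsF r s) ∧
    cOf (Finset.Ico 1 t.card ∪ K₂.image (fun k => k + t.card)) = t.card := by
  set c₀ := t.card with hc₀def
  set K' := Finset.Ico 1 c₀ ∪ K₂.image (fun k => k + c₀) with hK'def
  have hc₀ : 0 < c₀ := Finset.card_pos.2 htne
  have hc₀N : c₀ ≤ s.card := Finset.card_le_card hts
  have hw₁len : w₁.length = c₀ := length_of_mem_permsF hw₁
  have hK₂Ico : ∀ a ∈ K₂, 1 ≤ a ∧ a < s.card - c₀ := by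
    intro a ha
    have := hK₂ ha
    rw [Finset.mem_Ico, Finset.card_sdiff_of_subset hts] at this
    exact ⟨this.1, by omega⟩
  have hc₀K' : c₀ ∉ K' := by
    rw [hK'def, Finset.mem_union, Finset.mem_Ico]
    rintro (h | h)
    · omega
    · rw [Finset.mem_image] at h
      obtain ⟨a, ha, hae⟩ := h
      have := hK₂Ico a ha
      omega
  have hIco : Finset.Ico 1 c₀ ⊆ K' := Finset.subset_union_left
  have hchar : ∀ k', k' ∈ K₂ ↔ (0 < k' ∧ k' + c₀ ∈ K') := by
    intro k'
    constructor
    · intro h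
      refine ⟨(hK₂Ico k' h).1, ?_⟩
      rw [hK'def, Finset.mem_union, Finset.mem_image]
      exact Or.inr ⟨k', h, rfl⟩
    · rintro ⟨h0, hm⟩
      rw [hK'def, Finset.mem_union, Finset.mem_Ico, Finset.mem_image] at hm
      rcases hm with h | ⟨a, ha, hae⟩
      · omega
      · rw [show a = k' by omega] at ha
        exact ha
  have hFree : FreeW r (w₁ ++ w₂) K' :=
    (freeW_append r c₀ hw₁len hc₀ hIco hc₀K' hchar).2 ⟨hg, hF₂⟩
  constructor
  · rw [pairsF, Finset.mem_filter, Finset.mem_product]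
    refine ⟨⟨?_, ?_⟩, hFree⟩
    · rw [mem_permsF, ← Multiset.coe_add, mem_permsF.1 hw₁, mem_permsF.1 hw₂,
        Finset.sdiff_val]
      exact add_tsub_cancel_of_le (Finset.val_le_iff.2 hts)
    · rw [Finset.mem_powerset, hK'def]
      apply Finset.union_subset
      · exact Finset.Ico_subset_Ico (le_refl 1) hc₀N
      · intro x hx
        rw [Finset.mem_image] at hx
        obtain ⟨a, ha, hae⟩ := hx
        have := hK₂Ico a ha
        rw [Finset.mem_Ico]
        omega
  · apply cOf_eq _ hc₀ hc₀K'
    intro k h0 hk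
    exact hIco (Finset.mem_Ico.2 ⟨h0, hk⟩)

lemma K2_recover {K₂ : Finset ℕ} (c₀ : ℕ) (hpos : ∀ a ∈ K₂, 1 ≤ a) :
    ((Finset.Ico 1 c₀ ∪ K₂.image (fun k => k + c₀)).filter (fun k => c₀ < k)).image
      (fun k => k - c₀) = K₂ := by
  rw [Finset.filter_union]
  rw [Finset.filter_false_of_mem (fun x hx => by rw [Finset.mem_Ico] at hx; omega)]
  rw [Finset.filter_true_of_mem (fun x hx => by
    rw [Finset.mem_image] at hx
    obtain ⟨a, ha, hae⟩ := hx
    have := hpos a ha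
    omega)]
  rw [Finset.empty_union, Finset.image_image]
  rw [show ((fun k => k - c₀) ∘ (fun k => k + c₀)) = id by funext a; simp]
  exact Finset.image_id

lemma K_recover {K : Finset ℕ} {N : ℕ} (hK : K ⊆ Finset.Ico 1 N) :
    Finset.Ico 1 (cOf K) ∪
      ((K.filter (fun k => cOf K < k)).image (fun k => k - cOf K)).image
        (fun k => k + cOf K) = K := by
  rw [Finset.image_image]
  have : Finset.image ((fun k => k + cOf K) ∘ (fun k => k - cOf K))
      (K.filter (fun k => cOf K < k)) = K.filter (fun k => cOf K < k) := by
    rw [Finset.image_congr (g := id) (fun a ha => by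
      rw [Finset.mem_coe, Finset.mem_filter] at ha
      simp only [Function.comp, id]
      omega)]
    exact Finset.image_id
  rw [this]
  exact K_decomp hK

lemma SZ_rec {s : Finset α} (hs : s.Nonempty) :
    SZ r s = ∑ t ∈ s.powerset.filter (fun t => t.Nonempty),
      (-1 : ℤ) ^ (t.card - 1) * eL r t * SZ r (s \ t) := by
  have hN : 0 < s.card := Finset.card_pos.2 hs
  rw [SZ_eq_pairs]
  have step : ∑ p ∈ pairsF r s, (-1 : ℤ) ^ p.2.card
      = ∑ q ∈ (s.powerset.filter (fun t => t.Nonempty)).sigma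
          (fun t => ((permsF t).filter (GoodW r)) ×ˢ pairsF r (s \ t)),
          (-1 : ℤ) ^ (q.1.card - 1) * (-1 : ℤ) ^ q.2.2.2.card := by
    apply Finset.sum_nbij'
      (i := fun (p : List α × Finset ℕ) =>
        (⟨(p.1.take (cOf p.2)).toFinset,
        (p.1.take (cOf p.2), (p.1.drop (cOf p.2),
          (p.2.filter (fun k => cOf p.2 < k)).image (fun k => k - cOf p.2)))⟩ :
          Σ _t : Finset α, List α × List α × Finset ℕ))
      (j := fun q => (q.2.1 ++ q.2.2.1,
        Finset.Ico 1 q.1.card ∪ q.2.2.2.image (fun k => k + q.1.card)))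
    case hi =>
      rintro ⟨w, K⟩ hp
      rw [pairsF, Finset.mem_filter, Finset.mem_product, Finset.mem_powerset] at hp
      obtain ⟨⟨hw, hK⟩, hF⟩ := hp
      obtain ⟨h1, h2, h3, _, _⟩ := fwd_all r hN hw hK hF
      rw [Finset.mem_sigma]
      exact ⟨h1, Finset.mem_product.2 ⟨h2, h3⟩⟩
    case hj =>
      rintro ⟨t, w₁, w₂, K₂⟩ hq
      rw [Finset.mem_sigma, Finset.mem_filter, Finset.mem_powerset,
        Finset.mem_product, Finset.mem_filter] at hq
      obtain ⟨⟨hts, htne⟩, ⟨hw₁, hg⟩, hp₂⟩ := hq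
      rw [pairsF, Finset.mem_filter, Finset.mem_product, Finset.mem_powerset] at hp₂
      obtain ⟨⟨hw₂, hK₂⟩, hF₂⟩ := hp₂
      exact (bwd_all r hts htne hw₁ hg hw₂ hK₂ hF₂).1
    case left_neg =>
      rintro ⟨w, K⟩ hp
      rw [pairsF, Finset.mem_filter, Finset.mem_product, Finset.mem_powerset] at hp
      obtain ⟨⟨hw, hK⟩, hF⟩ := hp
      obtain ⟨_, _, _, htcard, _⟩ := fwd_all r hN hw hK hF
      show (_ ++ _, _) = (w, K)
      rw [List.take_append_drop, htcard, K_recover hK]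
    case right_neg =>
      rintro ⟨t, w₁, w₂, K₂⟩ hq
      rw [Finset.mem_sigma, Finset.mem_filter, Finset.mem_powerset,
        Finset.mem_product, Finset.mem_filter] at hq
      obtain ⟨⟨hts, htne⟩, ⟨hw₁, hg⟩, hp₂⟩ := hq
      rw [pairsF, Finset.mem_filter, Finset.mem_product, Finset.mem_powerset] at hp₂
      obtain ⟨⟨hw₂, hK₂⟩, hF₂⟩ := hp₂
      have hcOf := (bwd_all r hts htne hw₁ hg hw₂ hK₂ hF₂).2
      have hw₁len : w₁.length = t.card := length_of_mem_permsF hw₁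
      have hpos : ∀ a ∈ K₂, 1 ≤ a := fun a ha => by
        have := hK₂ ha; rw [Finset.mem_Ico] at this; exact this.1
      show (⟨_, (_, _, _)⟩ : Σ _t : Finset α, List α × List α × Finset ℕ) = _
      rw [hcOf, List.take_left' hw₁len, List.drop_left' hw₁len,
        toFinset_of_permsF hw₁, K2_recover t.card hpos]
    case h =>
      rintro ⟨w, K⟩ hp
      rw [pairsF, Finset.mem_filter, Finset.mem_product, Finset.mem_powerset] at hp
      obtain ⟨⟨hw, hK⟩, hF⟩ := hp
      obtain ⟨_, _, _, htcard, hcard⟩ := fwd_all r hN hw hK hF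
      show (-1 : ℤ) ^ K.card = _
      rw [htcard, hcard, pow_add]
  rw [step, Finset.sum_sigma]
  apply Finset.sum_congr rfl
  intro t ht
  rw [Finset.sum_product, eL, SZ_eq_pairs]
  dsimp only
  rw [Finset.sum_const, nsmul_eq_mul, ← Finset.mul_sum]
  ring

lemma SZ_conv {s : Finset α} (hs : s.Nonempty) :
    ∑ t ∈ s.powerset, (-1 : ℤ) ^ t.card * eL r t * SZ r (s \ t) = 0 := by
  rw [← Finset.sum_filter_add_sum_filter_not s.powerset (fun t => t.Nonempty)]
  have h2 : s.powerset.filter (fun t => ¬ t.Nonempty) = {∅} := by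
    apply Finset.ext
    intro t
    simp only [Finset.mem_filter, Finset.mem_powerset, Finset.mem_singleton,
      Finset.not_nonempty_iff_eq_empty]
    constructor
    · rintro ⟨_, h⟩; exact h
    · rintro rfl; exact ⟨Finset.empty_subset s, rfl⟩
  have h1 : ∑ t ∈ s.powerset.filter (fun t => t.Nonempty),
      (-1 : ℤ) ^ t.card * eL r t * SZ r (s \ t) = - SZ r s := by
    rw [SZ_rec r hs]
    rw [← Finset.sum_neg_distrib]
    apply Finset.sum_congr rfl
    intro t ht
    rw [Finset.mem_filter] at ht
    have hc : 0 < t.card := Finset.card_pos.2 ht.2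
    rw [show t.card = (t.card - 1) + 1 from by omega, pow_succ, Nat.add_sub_cancel]
    ring
  rw [h1, h2, Finset.sum_singleton]
  rw [Finset.card_empty, eL_empty, Finset.sdiff_empty, pow_zero]
  ring

lemma sdiff_union_distrib {sA sB a b : Finset α} (hdisj : Disjoint sA sB)
    (ha : a ⊆ sA) (hb : b ⊆ sB) :
    (sA ∪ sB) \ (a ∪ b) = (sA \ a) ∪ (sB \ b) := by
  apply Finset.ext
  intro x
  simp only [Finset.mem_sdiff, Finset.mem_union, not_or]
  constructor
  · rintro ⟨hx | hx, hxa, hxb⟩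
    · exact Or.inl ⟨hx, hxa⟩
    · exact Or.inr ⟨hx, hxb⟩
  · rintro (⟨hx, hxa⟩ | ⟨hx, hxb⟩)
    · exact ⟨Or.inl hx, hxa, fun hxb => Finset.disjoint_left.1 hdisj hx (hb hxb)⟩
    · exact ⟨Or.inr hx, fun hxa => Finset.disjoint_right.1 hdisj hx (ha hxa), hxb⟩

lemma SZ_mul_aux : ∀ n : ℕ, ∀ sA sB : Finset α, (sA ∪ sB).card = n →
    (∀ a ∈ sA, ∀ b ∈ sB, r a b ∧ ¬ r b a) → SZ r (sA ∪ sB) = SZ r sA * SZ r sB := by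
  intro n
  induction n using Nat.strong_induction_on with
  | _ n ih =>
    intro sA sB hcard hcross
    have hdisj : Disjoint sA sB := disjoint_of_cross r hcross
    by_cases hemp : sA ∪ sB = ∅
    · rw [Finset.union_eq_empty] at hemp
      rw [hemp.1, hemp.2, Finset.union_self, SZ_empty]
      norm_num
    · have hne : (sA ∪ sB).Nonempty := Finset.nonempty_iff_ne_empty.2 hemp
      -- the pair-indexed sums
      set P := sA.powerset ×ˢ sB.powerset with hP
      set T : Finset α × Finset α → ℤ := fun p =>
        (-1 : ℤ) ^ (p.1.card + p.2.card) * (eL r p.1 * eL r p.2) *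
          SZ r ((sA \ p.1) ∪ (sB \ p.2)) with hT
      set G : Finset α × Finset α → ℤ := fun p =>
        ((-1 : ℤ) ^ p.1.card * eL r p.1 * SZ r (sA \ p.1)) *
          ((-1 : ℤ) ^ p.2.card * eL r p.2 * SZ r (sB \ p.2)) with hG
      -- step 1 : ∑ T = 0
      have hsumT : ∑ p ∈ P, T p = 0 := by
        rw [← SZ_conv r hne]
        symm
        apply Finset.sum_nbij' (i := fun t => (t ∩ sA, t ∩ sB)) (j := fun p => p.1 ∪ p.2)
        case hi =>
          intro t ht
          rw [Finset.mem_powerset] at ht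
          rw [hP, Finset.mem_product, Finset.mem_powerset, Finset.mem_powerset]
          exact ⟨Finset.inter_subset_right, Finset.inter_subset_right⟩
        case hj =>
          rintro ⟨a, b⟩ hp
          rw [hP, Finset.mem_product, Finset.mem_powerset, Finset.mem_powerset] at hp
          rw [Finset.mem_powerset]
          exact Finset.union_subset (hp.1.trans Finset.subset_union_left)
            (hp.2.trans Finset.subset_union_right)
        case left_neg =>
          intro t ht
          rw [Finset.mem_powerset] at ht
          show t ∩ sA ∪ t ∩ sB = t
          rw [← Finset.inter_union_distrib_left, Finset.inter_eq_left.2 ht]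
        case right_neg =>
          rintro ⟨a, b⟩ hp
          rw [hP, Finset.mem_product, Finset.mem_powerset, Finset.mem_powerset] at hp
          have hbA : b ∩ sA = ∅ := Finset.disjoint_iff_inter_eq_empty.1
            (Finset.disjoint_of_subset_left hp.2 hdisj.symm)
          have haB : a ∩ sB = ∅ := Finset.disjoint_iff_inter_eq_empty.1
            (Finset.disjoint_of_subset_left hp.1 hdisj)
          have h1 : (a ∪ b) ∩ sA = a := by
            rw [Finset.union_inter_distrib_right, Finset.inter_eq_left.2 hp.1, hbA,
              Finset.union_empty]
          have h2 : (a ∪ b) ∩ sB = b := by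
            rw [Finset.union_inter_distrib_right, Finset.inter_eq_left.2 hp.2, haB,
              Finset.empty_union]
          show ((a ∪ b) ∩ sA, (a ∪ b) ∩ sB) = (a, b)
          rw [h1, h2]
        case h =>
          intro t ht
          rw [Finset.mem_powerset] at ht
          have hrec : t ∩ sA ∪ t ∩ sB = t := by
            rw [← Finset.inter_union_distrib_left, Finset.inter_eq_left.2 ht]
          have haA : t ∩ sA ⊆ sA := Finset.inter_subset_right
          have hbB : t ∩ sB ⊆ sB := Finset.inter_subset_right
          have hdab : Disjoint (t ∩ sA) (t ∩ sB) :=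
            Finset.disjoint_of_subset_left haA (Finset.disjoint_of_subset_right hbB hdisj)
          show (-1 : ℤ) ^ t.card * eL r t * SZ r ((sA ∪ sB) \ t) = T (t ∩ sA, t ∩ sB)
          rw [hT]
          dsimp only
          rw [← Finset.card_union_of_disjoint hdab, hrec]
          rw [← eL_union r (fun x hx y hy =>
            hcross x (haA hx) y (hbB hy)), hrec]
          rw [← sdiff_union_distrib hdisj haA hbB, hrec]
      -- step 2 : ∑ G = DA * DB = 0
      have hsumG : ∑ p ∈ P, G p = 0 := by
        have hfact : ∑ p ∈ P, G p
            = (∑ a ∈ sA.powerset, (-1 : ℤ) ^ a.card * eL r a * SZ r (sA \ a))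
              * (∑ b ∈ sB.powerset, (-1 : ℤ) ^ b.card * eL r b * SZ r (sB \ b)) := by
          rw [Finset.sum_mul_sum, hP, ← Finset.sum_product']
        rw [hfact]
        obtain ⟨x, hx⟩ := hne
        rw [Finset.mem_union] at hx
        rcases hx with h | h
        · rw [SZ_conv r ⟨x, h⟩, zero_mul]
        · rw [SZ_conv r ⟨x, h⟩, mul_zero]
      -- step 3 : T and G agree except at (∅, ∅)
      have hdiff : ∑ p ∈ P, (T p - G p) = SZ r (sA ∪ sB) - SZ r sA * SZ r sB := by
        have hmem : ((∅ : Finset α), (∅ : Finset α)) ∈ P := by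
          rw [hP, Finset.mem_product, Finset.mem_powerset, Finset.mem_powerset]
          exact ⟨Finset.empty_subset _, Finset.empty_subset _⟩
        rw [Finset.sum_eq_single_of_mem _ hmem]
        · rw [hT, hG]
          dsimp only
          rw [Finset.card_empty, eL_empty, Finset.sdiff_empty, Finset.sdiff_empty]
          ring
        · rintro ⟨a, b⟩ hp hne'
          rw [hP, Finset.mem_product, Finset.mem_powerset, Finset.mem_powerset] at hp
          have hub : (a ∪ b).Nonempty := by
            by_contra hc
            rw [Finset.not_nonempty_iff_eq_empty, Finset.union_eq_empty] at hc
            exact hne' (by rw [hc.1, hc.2])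
          have hsub : a ∪ b ⊆ sA ∪ sB := Finset.union_subset
            (hp.1.trans Finset.subset_union_left) (hp.2.trans Finset.subset_union_right)
          have hlt : ((sA \ a) ∪ (sB \ b)).card < n := by
            rw [← sdiff_union_distrib hdisj hp.1 hp.2, Finset.card_sdiff_of_subset hsub, ← hcard]
            have h1 : 0 < (a ∪ b).card := Finset.card_pos.2 hub
            have h2 : (a ∪ b).card ≤ (sA ∪ sB).card := Finset.card_le_card hsub
            omega
          have hcross' : ∀ x ∈ sA \ a, ∀ y ∈ sB \ b, r x y ∧ ¬ r y x := fun x hx y hy =>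
            hcross x (Finset.mem_sdiff.1 hx).1 y (Finset.mem_sdiff.1 hy).1
          have := ih _ hlt (sA \ a) (sB \ b) rfl hcross'
          rw [hT, hG]
          dsimp only
          rw [this]
          ring
      rw [Finset.sum_sub_distrib, hsumT, hsumG, sub_zero] at hdiff
      linarith [hdiff]

lemma SZ_mul {sA sB : Finset α} (hcross : ∀ a ∈ sA, ∀ b ∈ sB, r a b ∧ ¬ r b a) :
    SZ r (sA ∪ sB) = SZ r sA * SZ r sB :=
  SZ_mul_aux r _ sA sB rfl hcross

lemma ofFn_mem_permsF {N : ℕ} (ω : Equiv.Perm (Fin N)) :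
    List.ofFn ⇑ω ∈ permsF (Finset.univ : Finset (Fin N)) := by
  rw [mem_permsF]
  have hnd : (List.ofFn ⇑ω).Nodup := List.nodup_ofFn.2 ω.injective
  have htf : (List.ofFn ⇑ω).toFinset = Finset.univ := by
    apply Finset.eq_univ_of_forall
    intro x
    rw [List.mem_toFinset, List.mem_ofFn]
    exact ⟨ω⁻¹ x, Equiv.apply_symm_apply ω x⟩
  rw [← htf, List.toFinset_val, List.dedup_eq_self.2 hnd]

lemma sum_perm_eq {N : ℕ} (f : List (Fin N) → ℤ) :
    ∑ ω : Equiv.Perm (Fin N), f (List.ofFn ⇑ω)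
      = ∑ w ∈ permsF (Finset.univ : Finset (Fin N)), f w := by
  apply Finset.sum_bij (i := fun (ω : Equiv.Perm (Fin N)) _ => List.ofFn ⇑ω)
  · intro ω _
    exact ofFn_mem_permsF ω
  · intro ω₁ _ ω₂ _ h
    rw [List.ofFn_inj] at h
    exact Equiv.coe_fn_injective h
  · intro w hw
    have hlen : w.length = N := by
      rw [length_of_mem_permsF hw, Finset.card_univ, Fintype.card_fin]
    have hinj : Function.Injective (fun i : Fin N => w.get (Fin.cast hlen.symm i)) := by
      intro a b hab
      have := List.nodup_iff_injective_get.1 (nodup_of_mem_permsF hw) hab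
      exact Fin.cast_injective _ this
    refine ⟨Equiv.ofBijective _ (Finite.injective_iff_bijective.1 hinj), Finset.mem_univ _, ?_⟩
    apply List.ext_get (by rw [List.length_ofFn, hlen])
    intro k h1 h2
    rw [List.get_ofFn]
    rfl
  · intro ω _
    rfl

lemma borderSet_iff_freeW {N : ℕ} (le : Fin N → Fin N → Prop) [DecidableRel le]
    (ω : Equiv.Perm (Fin N)) {J : Finset ℕ} (hJ : J ⊆ Finset.Ico 1 N) :
    IsBorderSet N le ω J ↔ FreeW le (List.ofFn ⇑ω) (Finset.Ico 1 N \ J) := by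
  constructor
  · rintro ⟨hsub, h⟩ i j hij hK x y hx hy
    have hjN : j < N := by
      by_contra hc
      rw [List.getElem?_eq_none (by rw [List.length_ofFn]; omega)] at hy
      simp at hy
    have hiN : i < N := by omega
    rw [List.getElem?_ofFn] at hx hy
    rw [dif_pos hiN] at hx
    rw [dif_pos hjN] at hy
    rw [Option.some_inj] at hx hy
    rw [← hx, ← hy]
    apply h ⟨i, hiN⟩ ⟨j, hjN⟩ (by exact hij)
    intro s hs hcon
    have := hK s (by exact hcon.1) (by exact hcon.2)
    rw [Finset.mem_sdiff] at this
    exact this.2 hs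
  · intro hF
    refine ⟨hJ, ?_⟩
    intro i j hij hborder
    have hx : (List.ofFn ⇑ω)[(i : ℕ)]? = some (ω i) := by
      rw [List.getElem?_ofFn, dif_pos i.isLt, Fin.eta]
    have hy : (List.ofFn ⇑ω)[(j : ℕ)]? = some (ω j) := by
      rw [List.getElem?_ofFn, dif_pos j.isLt, Fin.eta]
    apply hF (i : ℕ) (j : ℕ) (by exact hij) ?_ _ _ hx hy
    intro k h1 h2
    rw [Finset.mem_sdiff, Finset.mem_Ico]
    have hkN : k < N := by have := j.isLt; omega
    refine ⟨⟨by omega, hkN⟩, fun hkJ => hborder k hkJ ⟨h1, h2⟩⟩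

lemma comp_eq_free {N : ℕ} (le : Fin N → Fin N → Prop) [DecidableRel le]
    (ω : Equiv.Perm (Fin N)) :
    ∑ J ∈ CompSet N le ω, (-1 : ℤ) ^ ((N - 1) - J.card)
      = ∑ K ∈ (Finset.Ico 1 N).powerset,
          if FreeW le (List.ofFn ⇑ω) K then (-1 : ℤ) ^ K.card else 0 := by
  rw [← Finset.sum_filter]
  apply Finset.sum_nbij' (i := fun J => Finset.Ico 1 N \ J) (j := fun K => Finset.Ico 1 N \ K)
  case hi =>
    intro J hJ
    rw [CompSet, Finset.mem_filter, Finset.mem_powerset] at hJ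
    rw [Finset.mem_filter, Finset.mem_powerset]
    exact ⟨Finset.sdiff_subset, (borderSet_iff_freeW le ω hJ.1).1 hJ.2⟩
  case hj =>
    intro K hK
    rw [Finset.mem_filter, Finset.mem_powerset] at hK
    rw [CompSet, Finset.mem_filter, Finset.mem_powerset]
    refine ⟨Finset.sdiff_subset, ?_⟩
    rw [borderSet_iff_freeW le ω Finset.sdiff_subset,
      Finset.sdiff_sdiff_eq_self hK.1]
    exact hK.2
  case left_neg =>
    intro J hJ
    rw [CompSet, Finset.mem_filter, Finset.mem_powerset] at hJ
    exact Finset.sdiff_sdiff_eq_self hJ.1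
  case right_neg =>
    intro K hK
    rw [Finset.mem_filter, Finset.mem_powerset] at hK
    exact Finset.sdiff_sdiff_eq_self hK.1
  case h =>
    intro J hJ
    rw [CompSet, Finset.mem_filter, Finset.mem_powerset] at hJ
    rw [Finset.card_sdiff_of_subset hJ.1, Nat.card_Ico]

section Congr

lemma mem_of_getElem?' {l : List α} {i : ℕ} {x : α} (h : l[i]? = some x) : x ∈ l := by
  obtain ⟨hlt, he⟩ := List.getElem?_eq_some_iff.1 h
  rw [← he]
  exact List.getElem_mem hlt

variable {β : Type*} [DecidableEq β] (r' : β → β → Prop) [DecidableRel r']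

lemma freeW_map {f : α → β} {s : Finset α} (hinj : Set.InjOn f ↑s)
    (hcompat : ∀ x ∈ s, ∀ y ∈ s, (r x y ↔ r' (f x) (f y)))
    {w : List α} (hw : ∀ x ∈ w, x ∈ s) (K : Finset ℕ) :
    FreeW r w K ↔ FreeW r' (w.map f) K := by
  constructor
  · intro hF i j hij hK x' y' hx hy
    rw [List.getElem?_map] at hx hy
    rcases ho : w[i]? with _ | x
    · rw [ho] at hx; simp at hx
    rcases ho2 : w[j]? with _ | y
    · rw [ho2] at hy; simp at hy
    rw [ho] at hx; rw [ho2] at hy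
    rw [Option.map_some] at hx hy
    rw [Option.some_inj] at hx hy
    have hxs : x ∈ s := hw x (mem_of_getElem?' ho)
    have hys : y ∈ s := hw y (mem_of_getElem?' ho2)
    rw [← hx, ← hy, ← hcompat y hys x hxs]
    exact hF i j hij hK x y ho ho2
  · intro hF i j hij hK x y hx hy
    have hxs : x ∈ s := hw x (mem_of_getElem?' hx)
    have hys : y ∈ s := hw y (mem_of_getElem?' hy)
    rw [hcompat y hys x hxs]
    refine hF i j hij hK (f x) (f y) ?_ ?_
    · rw [List.getElem?_map, hx, Option.map_some]
    · rw [List.getElem?_map, hy, Option.map_some]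

lemma SZ_congr (f : α → β) {s : Finset α} (hinj : Set.InjOn f ↑s)
    (hcompat : ∀ x ∈ s, ∀ y ∈ s, (r x y ↔ r' (f x) (f y))) :
    SZ r' (s.image f) = SZ r s := by
  rw [SZ_eq_pairs, SZ_eq_pairs]
  symm
  have hcardim : (s.image f).card = s.card := Finset.card_image_of_injOn hinj
  apply Finset.sum_bij (i := fun (p : List α × Finset ℕ) _ => (p.1.map f, p.2))
  · rintro ⟨w, K⟩ hp
    rw [pairsF, Finset.mem_filter, Finset.mem_product, Finset.mem_powerset] at hp ⊢
    obtain ⟨⟨hw, hK⟩, hF⟩ := hp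
    have hwmem : ∀ x ∈ w, x ∈ s := fun x hx => mem_of_mem_permsF hw hx
    refine ⟨⟨?_, by rwa [hcardim]⟩, ?_⟩
    · rw [mem_permsF, Finset.image_val_of_injOn hinj, ← mem_permsF.1 hw]
      exact (Multiset.map_coe f w).symm
    · exact (freeW_map r r' hinj hcompat hwmem K).1 hF
  · rintro ⟨w₁, K₁⟩ hp₁ ⟨w₂, K₂⟩ hp₂ h
    rw [pairsF, Finset.mem_filter, Finset.mem_product] at hp₁ hp₂
    rw [Prod.mk.injEq] at h ⊢
    refine ⟨?_, h.2⟩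
    have hm₁ : ∀ x ∈ w₁, x ∈ s := fun x hx => mem_of_mem_permsF hp₁.1.1 hx
    have hm₂ : ∀ x ∈ w₂, x ∈ s := fun x hx => mem_of_mem_permsF hp₂.1.1 hx
    have hlen : w₁.length = w₂.length := by
      have := congrArg List.length h.1
      simpa using this
    apply List.ext_get hlen
    intro k hk1 hk2
    have h' := congrArg (fun l => l[k]?) h.1
    simp only [List.getElem?_map] at h'
    rw [List.getElem?_eq_getElem hk1, List.getElem?_eq_getElem hk2,
      Option.map_some, Option.map_some, Option.some_inj] at h'
    simp only [List.get_eq_getElem]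
    exact hinj (hm₁ _ (List.getElem_mem hk1)) (hm₂ _ (List.getElem_mem hk2)) h' 
  · rintro ⟨w', K'⟩ hp'
    rw [pairsF, Finset.mem_filter, Finset.mem_product, Finset.mem_powerset] at hp'
    obtain ⟨⟨hw', hK'⟩, hF'⟩ := hp'
    by_cases hse : s = ∅
    · subst hse
      rw [Finset.image_empty] at hw'
      have : w' = [] := by
        have := mem_permsF.1 hw'
        simpa using this
      subst this
      refine ⟨([], K'), ?_, ?_⟩
      · rw [pairsF, Finset.mem_filter, Finset.mem_product, Finset.mem_powerset]
        refine ⟨⟨by rw [mem_permsF]; rfl, ?_⟩, ?_⟩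
        · rwa [← hcardim, Finset.image_empty]
        · intro i j hij hK x y hx hy
          simp at hx
      · rfl
    · have hsne : s.Nonempty := Finset.nonempty_iff_ne_empty.2 hse
      have : Nonempty α := ⟨hsne.choose⟩
      set g := Function.invFunOn f ↑s with hg
      have hgf : ∀ x ∈ s, g (f x) = x := fun x hx => hinj.leftInvOn_invFunOn hx
      have hfg : ∀ y ∈ s.image f, f (g y) = y := by
        intro y hy
        rw [Finset.mem_image] at hy
        obtain ⟨x, hx, rfl⟩ := hy
        exact Function.invFunOn_eq ⟨x, hx, rfl⟩
      set w := w'.map g with hwdef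
      have hmapfw : w.map f = w' := by
        rw [hwdef, List.map_map]
        have hcong : List.map (f ∘ g) w' = List.map id w' :=
          List.map_congr_left (fun a ha => hfg a (mem_of_mem_permsF hw' ha))
        rw [hcong, List.map_id]
      have hwmem : w ∈ permsF s := by
        rw [mem_permsF, hwdef, ← Multiset.map_coe, mem_permsF.1 hw',
          Finset.image_val_of_injOn hinj, Multiset.map_map]
        have hmc : Multiset.map (g ∘ f) s.val = Multiset.map id s.val :=
          Multiset.map_congr rfl (fun x hx => hgf x hx)
        rw [hmc, Multiset.map_id]
      have hwall : ∀ x ∈ w, x ∈ s := fun x hx => mem_of_mem_permsF hwmem hx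
      refine ⟨(w, K'), ?_, ?_⟩
      · rw [pairsF, Finset.mem_filter, Finset.mem_product, Finset.mem_powerset]
        refine ⟨⟨hwmem, by rwa [← hcardim]⟩, ?_⟩
        rw [freeW_map r r' hinj hcompat hwall K', hmapfw]
        exact hF'
      · rw [Prod.mk.injEq]
        exact ⟨hmapfw, rfl⟩
  · rintro ⟨w, K⟩ hp
    rfl

end Congr

set_option maxHeartbeats 2000000 in
lemma chi_sum_eq {N : ℕ} (le : Fin N → Fin N → Prop) [DecidableRel le] :
    (∑ ω : Equiv.Perm (Fin N), ∑ J ∈ CompSet N le ω, (-1 : ℤ) ^ ((N - 1) - J.card))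
      = SZ le (Finset.univ : Finset (Fin N)) := by
  have h1 : ∀ ω : Equiv.Perm (Fin N),
      ∑ J ∈ CompSet N le ω, (-1 : ℤ) ^ ((N - 1) - J.card)
        = (fun w => ∑ K ∈ (Finset.Ico 1 N).powerset,
            if FreeW le w K then (-1 : ℤ) ^ K.card else 0) (List.ofFn ⇑ω) :=
    fun ω => comp_eq_free le ω
  calc ∑ ω : Equiv.Perm (Fin N), ∑ J ∈ CompSet N le ω, (-1 : ℤ) ^ ((N - 1) - J.card)
      = ∑ ω : Equiv.Perm (Fin N),
          (fun w => ∑ K ∈ (Finset.Ico 1 N).powerset,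
            if FreeW le w K then (-1 : ℤ) ^ K.card else 0) (List.ofFn ⇑ω) :=
        Finset.sum_congr rfl (fun ω _ => h1 ω)
    _ = ∑ w ∈ permsF (Finset.univ : Finset (Fin N)),
          (fun w => ∑ K ∈ (Finset.Ico 1 N).powerset,
            if FreeW le w K then (-1 : ℤ) ^ K.card else 0) w :=
        sum_perm_eq (fun w => ∑ K ∈ (Finset.Ico 1 N).powerset,
            if FreeW le w K then (-1 : ℤ) ^ K.card else 0)
    _ = SZ le Finset.univ := by
        rw [SZ]
        simp only [Finset.card_univ, Fintype.card_fin]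

set_option maxHeartbeats 2000000 in
theorem stmt11' (m n : ℕ)
    (leP : Fin m → Fin m → Prop) [DecidableRel leP]
    (leQ : Fin n → Fin n → Prop) [DecidableRel leQ] :
    (∑ ω : Equiv.Perm (Fin (m + n)),
        ∑ J ∈ CompSet (m + n) (OrdSumLe m n leP leQ) ω,
          (-1 : ℤ) ^ ((m + n - 1) - J.card)) =
      (∑ ω : Equiv.Perm (Fin m),
          ∑ J ∈ CompSet m leP ω, (-1 : ℤ) ^ ((m - 1) - J.card)) *
        (∑ ω : Equiv.Perm (Fin n),
          ∑ J ∈ CompSet n leQ ω, (-1 : ℤ) ^ ((n - 1) - J.card)) := by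
  rw [chi_sum_eq, chi_sum_eq, chi_sum_eq]
  have hA : SZ (OrdSumLe m n leP leQ)
      ((Finset.univ : Finset (Fin m)).image
        (fun x : Fin m => (⟨x.1, by have := x.2; omega⟩ : Fin (m + n))))
      = SZ leP Finset.univ := by
    apply SZ_congr
    · intro a _ b _ h
      have h' := congrArg Fin.val h
      simp only [] at h'
      exact Fin.ext (by omega)
    · intro x _ y _
      constructor
      · intro h
        exact Or.inl ⟨x.2, y.2, by simpa [Fin.eta] using h⟩
      · rintro (⟨hx, hy, h⟩ | ⟨hx, hy, h⟩ | ⟨h1, h2⟩)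
        · simpa [Fin.eta] using h
        · exfalso; have := x.2; simp only [] at hx; omega
        · exfalso; have := y.2; simp only [] at h2; omega
  have hB : SZ (OrdSumLe m n leP leQ)
      ((Finset.univ : Finset (Fin n)).image
        (fun y : Fin n => (⟨m + y.1, by have := y.2; omega⟩ : Fin (m + n))))
      = SZ leQ Finset.univ := by
    apply SZ_congr
    · intro a _ b _ h
      have := congrArg Fin.val h
      simp only [] at this
      exact Fin.ext (by omega)
    · intro x _ y _
      constructor
      · intro h
        refine Or.inr (Or.inl ⟨by simp, by simp, ?_⟩)
        have e1 : (⟨m + x.1 - m, by have := x.2; omega⟩ : Fin n) = x :=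
          Fin.ext (by simp)
        have e2 : (⟨m + y.1 - m, by have := y.2; omega⟩ : Fin n) = y :=
          Fin.ext (by simp)
        simpa [e1, e2] using h
      · rintro (⟨hx, hy, h⟩ | ⟨hx, hy, h⟩ | ⟨h1, h2⟩)
        · exfalso; simp only [] at hx; omega
        · have e1 : (⟨m + x.1 - m, by have := x.2; omega⟩ : Fin n) = x :=
            Fin.ext (by simp)
          have e2 : (⟨m + y.1 - m, by have := y.2; omega⟩ : Fin n) = y :=
            Fin.ext (by simp)
          simpa [e1, e2] using h
        · exfalso; simp only [] at h1; omega
  have hunion : ((Finset.univ : Finset (Fin m)).image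
        (fun x : Fin m => (⟨x.1, by have := x.2; omega⟩ : Fin (m + n))))
      ∪ ((Finset.univ : Finset (Fin n)).image
        (fun y : Fin n => (⟨m + y.1, by have := y.2; omega⟩ : Fin (m + n))))
      = (Finset.univ : Finset (Fin (m + n))) := by
    apply Finset.eq_univ_of_forall
    intro z
    rw [Finset.mem_union, Finset.mem_image, Finset.mem_image]
    by_cases hz : z.1 < m
    · exact Or.inl ⟨⟨z.1, hz⟩, Finset.mem_univ _, Fin.ext rfl⟩
    · exact Or.inr ⟨⟨z.1 - m, by have := z.2; omega⟩, Finset.mem_univ _,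
        Fin.ext (by simp; omega)⟩
  have hcross : ∀ a ∈ ((Finset.univ : Finset (Fin m)).image
        (fun x : Fin m => (⟨x.1, by have := x.2; omega⟩ : Fin (m + n)))),
      ∀ b ∈ ((Finset.univ : Finset (Fin n)).image
        (fun y : Fin n => (⟨m + y.1, by have := y.2; omega⟩ : Fin (m + n)))),
      OrdSumLe m n leP leQ a b ∧ ¬ OrdSumLe m n leP leQ b a := by
    intro a ha b hb
    rw [Finset.mem_image] at ha hb
    obtain ⟨x, _, rfl⟩ := ha
    obtain ⟨y, _, rfl⟩ := hb
    have hx : x.1 < m := x.2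
    constructor
    · exact Or.inr (Or.inr ⟨hx, by simp⟩)
    · rintro (⟨h1, h2, h3⟩ | ⟨h1, h2, h3⟩ | ⟨h1, h2⟩)
      · simp only [] at h1; omega
      · simp only [] at h2; omega
      · simp only [] at h1; omega
  rw [← hunion, SZ_mul _ hcross, hA, hB]

/-- the character `ζ₁(P) = Σ_ω χ(P, ω)`, where
`χ(R, ω) = Σ_{J ∈ Comp(R,ω)} (−1)^{(N−1)−|J|}`, is multiplicative with respect to
the ordinal sum of posets. -/
theorem stmt11 (m n : ℕ)
    (leP : Fin m → Fin m → Prop) [DecidableRel leP] (hP : IsPartialOrder (Fin m) leP)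
    (leQ : Fin n → Fin n → Prop) [DecidableRel leQ] (hQ : IsPartialOrder (Fin n) leQ) :
    (∑ ω : Equiv.Perm (Fin (m + n)),
        ∑ J ∈ CompSet (m + n) (OrdSumLe m n leP leQ) ω,
          (-1 : ℤ) ^ ((m + n - 1) - J.card)) =
      (∑ ω : Equiv.Perm (Fin m),
          ∑ J ∈ CompSet m leP ω, (-1 : ℤ) ^ ((m - 1) - J.card)) *
        (∑ ω : Equiv.Perm (Fin n),
          ∑ J ∈ CompSet n leQ ω, (-1 : ℤ) ^ ((n - 1) - J.card)) := by
  exact stmt11' m n leP leQ
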